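/- Let α > 0 and m ∈ ℝ³. With respect to the ℓ∞ operator norm on 3×3 real matrices, |A|_∞ := max over rows i of Σⱼ |a_{ij}|, the inverse of α I₃ + M(m) satisfies |(α I₃ + M(m))⁻¹|_∞ ≤ 2/α. -/

import Mathlib

open Matrix

/-- For `m = (m₁,m₂,m₃) ∈ ℝ³`, the matrix `M(m)` with rows `(0, −m₃, m₂)`,
`(m₃, 0, −m₁)`, `(−m₂, m₁, 0)`, so that `M(m) v = m × v`. -/
noncomputable def crossMatrix (m : EuclideanSpace ℝ (Fin 3)) : Matrix (Fin 3) (Fin 3) ℝ :=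
  !![0, -m 2, m 1; m 2, 0, -m 0; -m 1, m 0, 0]

/-- The `ℓ∞` operator norm `|A|_∞ = maxᵢ Σⱼ |a_{ij}|` of a `3×3` real matrix. -/
noncomputable def matNormInf (A : Matrix (Fin 3) (Fin 3) ℝ) : ℝ :=
  Finset.univ.sup' Finset.univ_nonempty fun i => ∑ j, |A i j|

lemma three_div (α s d p q r : ℝ) (hα : 0 < α) (hs : 0 ≤ s) (hd : d = α * (α^2 + s))
    (h : |p| + |q| + |r| ≤ 2 * (α^2 + s)) :
    |d⁻¹ * p| + |d⁻¹ * q| + |d⁻¹ * r| ≤ 2 / α := by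
  have hd0 : 0 < d := by rw [hd]; positivity
  have e : |d⁻¹ * p| + |d⁻¹ * q| + |d⁻¹ * r| = (|p| + |q| + |r|) / d := by
    rw [abs_mul, abs_mul, abs_mul, abs_inv, abs_of_pos hd0]; ring
  rw [e, div_le_div_iff₀ hd0 hα, hd]
  nlinarith [abs_nonneg p, abs_nonneg q, abs_nonneg r]

lemma row_core (α x y z : ℝ) (hα : 0 < α) :
    |α^2 + x^2| + |α*z + x*y| + |-(α*y) + x*z| ≤ 2 * (α^2 + (x^2 + y^2 + z^2)) := by
  have h1 : |α^2 + x^2| = α^2 + x^2 := abs_of_nonneg (by positivity)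
  have h2 : |α*z + x*y| ≤ α * |z| + |x| * |y| := by
    calc |α*z + x*y| ≤ |α*z| + |x*y| := abs_add_le _ _
      _ = α * |z| + |x| * |y| := by rw [abs_mul, abs_mul, abs_of_pos hα]
  have h3 : |-(α*y) + x*z| ≤ α * |y| + |x| * |z| := by
    calc |-(α*y) + x*z| ≤ |(-(α*y))| + |x*z| := abs_add_le _ _
      _ = α * |y| + |x| * |z| := by rw [abs_neg, abs_mul, abs_mul, abs_of_pos hα]
  nlinarith [sq_abs x, sq_abs y, sq_abs z, sq_nonneg (α - |y|), sq_nonneg (α - |z|),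
    sq_nonneg (|x| - |y|), sq_nonneg (|x| - |z|), abs_nonneg x, abs_nonneg y, abs_nonneg z]

/-- For `α > 0` and `m ∈ ℝ³`, the inverse of `α I₃ + M(m)` satisfies
`|(α I₃ + M(m))⁻¹|_∞ ≤ 2/α`. -/
theorem matNormInf_inv_le (α : ℝ) (hα : 0 < α) (m : EuclideanSpace ℝ (Fin 3)) :
    matNormInf (α • (1 : Matrix (Fin 3) (Fin 3) ℝ) + crossMatrix m)⁻¹ ≤ 2 / α := by
  set a := m 0 with ha
  set b := m 1 with hb
  set c := m 2 with hc
  set d := α * (α^2 + (a^2 + b^2 + c^2)) with hd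
  have hs : (0:ℝ) ≤ a^2 + b^2 + c^2 := by positivity
  have hd0 : 0 < d := by rw [hd]; positivity
  have hB : (α • (1 : Matrix (Fin 3) (Fin 3) ℝ) + crossMatrix m)⁻¹ =
      d⁻¹ • !![α^2+a^2, α*c+a*b, -(α*b)+a*c;
               -(α*c)+b*a, α^2+b^2, α*a+b*c;
               α*b+c*a, -(α*a)+c*b, α^2+c^2] := by
    apply Matrix.inv_eq_right_inv
    ext i j
    fin_cases i <;> fin_cases j <;>
      · simp [crossMatrix, Matrix.mul_apply, Fin.sum_univ_three, Matrix.one_apply,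
          ← ha, ← hb, ← hc]
        field_simp
        ring
  rw [hB]
  unfold matNormInf
  apply Finset.sup'_le
  intro i _
  fin_cases i
  · simp only [Matrix.smul_apply, smul_eq_mul, Fin.sum_univ_three]
    simp
    rw [← abs_inv, ← abs_mul, ← abs_mul, ← abs_mul]
    exact three_div α (a^2+b^2+c^2) d _ _ _ hα hs hd (row_core α a b c hα)
  · simp only [Matrix.smul_apply, smul_eq_mul, Fin.sum_univ_three]
    simp
    rw [← abs_inv, ← abs_mul, ← abs_mul, ← abs_mul]
    refine three_div α (a^2+b^2+c^2) d _ _ _ hα hs hd ?_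
    have := row_core α b c a hα
    calc |-(α*c) + b*a| + |α^2 + b^2| + |α*a + b*c|
        = |α^2 + b^2| + |α*a + b*c| + |-(α*c) + b*a| := by ring
      _ ≤ 2 * (α^2 + (b^2 + c^2 + a^2)) := this
      _ = 2 * (α^2 + (a^2 + b^2 + c^2)) := by ring
  · simp only [Matrix.smul_apply, smul_eq_mul, Fin.sum_univ_three]
    simp
    rw [← abs_inv, ← abs_mul, ← abs_mul, ← abs_mul]
    refine three_div α (a^2+b^2+c^2) d _ _ _ hα hs hd ?_
    have := row_core α c a b hα
    calc |α*b + c*a| + |-(α*a) + c*b| + |α^2 + c^2|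
        = |α^2 + c^2| + |α*b + c*a| + |-(α*a) + c*b| := by ring
      _ ≤ 2 * (α^2 + (c^2 + a^2 + b^2)) := this
      _ = 2 * (α^2 + (a^2 + b^2 + c^2)) := by ring
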